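/- Let γ be a geodesic from its endpoint a to b, subdivided by points x_i = γ(2Mi) for 0 ≤ i ≤ k with k = ⌊l/(2M)⌋ − 1 where l = d(a,b) > 8M. If fewer than half of the points x_1,…,x_k lie in the M-neighborhood of an orbit Go, then the connected components of γ ∖ N_{M/2}(Go) of length at least M have total length at least Mk/2, which exceeds l/8. -/

import Mathlib

set_option maxHeartbeats 1000000

/-- A parametrized geodesic from `x` to `y`. -/
structure GeodesicFrom {X : Type} [MetricSpace X] (x y : X) where
  toFun : ℝ → X
  source : toFun 0 = x
  target : toFun (dist x y) = y
  isom : ∀ s ∈ Set.Icc (0 : ℝ) (dist x y), ∀ t ∈ Set.Icc (0 : ℝ) (dist x y),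
    dist (toFun s) (toFun t) = |s - t|

/-- subdivide a geodesic `γ` from `a` to `b` of length `l > 8M` by points
`x_i = γ(2Mi)`, `1 ≤ i ≤ k = ⌊l/(2M)⌋ − 1`. If fewer than half of the `x_i` lie in the
`M`-neighborhood of the orbit `G·o`, then the union of connected components of
`γ ∖ N_{M/2}(G·o)` of length at least `M` has total length at least `Mk/2 > l/8`. -/
theorem stmt13 {G X : Type} [Group G] [MetricSpace X] [MulAction G X] [IsIsometricSMul G X]
    (o a b : X) (M : ℝ) (hM : 0 < M) (γ : GeodesicFrom a b)
    (hl : 8 * M < dist a b) (k : ℕ) (hk : (k : ℤ) = ⌊dist a b / (2 * M)⌋ - 1)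
    (hfew : (({i : ℕ | 1 ≤ i ∧ i ≤ k ∧
        γ.toFun (2 * M * i) ∈ Metric.thickening M (MulAction.orbit G o)}.ncard : ℝ))
      < (k : ℝ) / 2) :
    M * k / 2 ≤
      (MeasureTheory.volume
        {s : ℝ |
          (s ∈ Set.Icc 0 (dist a b) ∧
            γ.toFun s ∉ Metric.thickening (M / 2) (MulAction.orbit G o)) ∧
          M ≤ Metric.diam (connectedComponentIn
            {u : ℝ | u ∈ Set.Icc 0 (dist a b) ∧
              γ.toFun u ∉ Metric.thickening (M / 2) (MulAction.orbit G o)} s)}).toReal ∧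
    dist a b / 8 < M * k / 2 := by
  classical
  set l := dist a b with hldef
  set E := MulAction.orbit G o with hE
  have hl0 : 0 < l := lt_trans (by nlinarith) hl
  have hkr : (k : ℝ) = ((⌊l / (2 * M)⌋ : ℤ) : ℝ) - 1 := by exact_mod_cast hk
  have hfloor_le : ((⌊l / (2 * M)⌋ : ℤ) : ℝ) ≤ l / (2 * M) := Int.floor_le _
  have hfloor_gt : l / (2 * M) - 1 < ((⌊l / (2 * M)⌋ : ℤ) : ℝ) := Int.sub_one_lt_floor _
  have h2M : (0:ℝ) < 2 * M := by linarith
  have hkub : ((k : ℝ) + 1) * (2 * M) ≤ l := by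
    have h1 : (k : ℝ) + 1 ≤ l / (2 * M) := by linarith
    calc ((k : ℝ) + 1) * (2 * M) ≤ (l / (2 * M)) * (2 * M) := by nlinarith
      _ = l := by field_simp
  have hklb : l / (2 * M) - 2 < (k : ℝ) := by linarith
  -- second conjunct
  have hsecond : l / 8 < M * k / 2 := by
    have e : M * (l / (2 * M) - 2) = l / 2 - 2 * M := by field_simp
    have h1 : l / 2 - 2 * M < M * (k : ℝ) := by
      have := mul_lt_mul_of_pos_left hklb hM
      linarith [this, e.symm.le]
    linarith
  -- the ambient set S0
  set S0 : Set ℝ := {u : ℝ | u ∈ Set.Icc 0 l ∧ γ.toFun u ∉ Metric.thickening (M / 2) E}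
    with hS0
  set T : Set ℝ := {s : ℝ | (s ∈ Set.Icc 0 l ∧ γ.toFun s ∉ Metric.thickening (M / 2) E) ∧
      M ≤ Metric.diam (connectedComponentIn S0 s)} with hT
  -- counting good indices
  set bad : Finset ℕ := (Finset.Icc 1 k).filter
      (fun i => γ.toFun (2 * M * i) ∈ Metric.thickening M E) with hbad
  set good : Finset ℕ := (Finset.Icc 1 k).filter
      (fun i => ¬ γ.toFun (2 * M * i) ∈ Metric.thickening M E) with hgood
  have hsetbad : {i : ℕ | 1 ≤ i ∧ i ≤ k ∧
      γ.toFun (2 * M * i) ∈ Metric.thickening M E} = (bad : Set ℕ) := by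
    ext i; simp [hbad, Finset.mem_Icc, and_assoc]
  have hbadcard : ((bad.card : ℝ)) < (k : ℝ) / 2 := by
    rw [hsetbad, Set.ncard_coe_finset] at hfew; exact hfew
  have hcards : bad.card + good.card = k := by
    rw [hbad, hgood, Finset.card_filter_add_card_filter_not, Nat.card_Icc]
    omega
  have hgoodcard : (k : ℝ) / 2 < (good.card : ℝ) := by
    have : (bad.card : ℝ) + (good.card : ℝ) = (k : ℝ) := by exact_mod_cast hcards
    linarith
  -- the intervals
  set I : ℕ → Set ℝ := fun i => Set.Icc (2 * M * i - M / 2) (2 * M * i + M / 2) with hI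
  have hIsub : ∀ i ∈ good, I i ⊆ S0 := by
    intro i hi
    simp only [hgood, Finset.mem_filter, Finset.mem_Icc] at hi
    obtain ⟨⟨hi1, hik⟩, hnot⟩ := hi
    have hi1r : (1 : ℝ) ≤ (i : ℝ) := by exact_mod_cast hi1
    have hikr : (i : ℝ) ≤ (k : ℝ) := by exact_mod_cast hik
    have hm1 : 2 * M * 1 ≤ 2 * M * (i : ℝ) := by nlinarith
    have hm2 : 2 * M * (i : ℝ) ≤ 2 * M * (k : ℝ) := by nlinarith
    intro u hu
    obtain ⟨hu1, hu2⟩ := hu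
    have hu0 : 0 ≤ u := by linarith
    have hul : u ≤ l := by nlinarith
    have hxi0 : 0 ≤ 2 * M * (i : ℝ) := by linarith
    have hxil : 2 * M * (i : ℝ) ≤ l := by nlinarith
    refine ⟨⟨hu0, hul⟩, ?_⟩
    intro hmem
    apply hnot
    rw [Metric.mem_thickening_iff] at hmem ⊢
    obtain ⟨y, hy, hdy⟩ := hmem
    refine ⟨y, hy, ?_⟩
    have hdist : dist (γ.toFun (2 * M * i)) (γ.toFun u) = |2 * M * i - u| :=
      γ.isom _ ⟨hxi0, hxil⟩ _ ⟨hu0, hul⟩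
    have habs : |2 * M * (i:ℝ) - u| ≤ M / 2 := by
      rw [abs_le]; constructor <;> linarith
    calc dist (γ.toFun (2 * M * i)) y
        ≤ dist (γ.toFun (2 * M * i)) (γ.toFun u) + dist (γ.toFun u) y := dist_triangle _ _ _
      _ < M / 2 + M / 2 := by rw [hdist]; linarith
      _ = M := by ring
  have hIT : ∀ i ∈ good, I i ⊆ T := by
    intro i hi u hu
    have hsub := hIsub i hi
    refine ⟨hsub hu, ?_⟩
    have hcc : I i ⊆ connectedComponentIn S0 u :=
      isPreconnected_Icc.subset_connectedComponentIn hu hsub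
    have hccS0 : connectedComponentIn S0 u ⊆ Set.Icc 0 l :=
      (connectedComponentIn_subset S0 u).trans (fun x hx => hx.1)
    have hbdd : Bornology.IsBounded (connectedComponentIn S0 u) :=
      (Metric.isBounded_Icc 0 l).subset hccS0
    have hdiam : Metric.diam (I i) = M := by
      rw [hI]; rw [Real.diam_Icc (by linarith)]; ring
    calc M = Metric.diam (I i) := hdiam.symm
      _ ≤ Metric.diam (connectedComponentIn S0 u) := Metric.diam_mono hcc hbdd
  -- pairwise disjointness
  have key : ∀ i j : ℕ, i < j → Disjoint (I i) (I j) := by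
    intro i j h
    have hij : (i : ℝ) + 1 ≤ (j : ℝ) := by exact_mod_cast h
    rw [hI]
    simp only
    have hlt : 2 * M * (i:ℝ) + M / 2 < 2 * M * (j:ℝ) - M / 2 := by nlinarith
    apply Set.disjoint_left.mpr
    intro x hx hx'
    have h1 := hx.2
    have h2 := hx'.1
    linarith
  have hdisj : (good : Set ℕ).PairwiseDisjoint I := by
    intro i _ j _ hij
    rcases lt_or_gt_of_ne hij with h | h
    · exact key i j h
    · exact (key j i h).symm
  -- measure computation
  have hmeas : ∀ i ∈ good, MeasurableSet (I i) := fun i _ => measurableSet_Icc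
  have hvolI : ∀ i ∈ good, MeasureTheory.volume (I i) = ENNReal.ofReal M := by
    intro i _
    rw [hI]
    simp only
    rw [Real.volume_Icc]
    congr 1
    ring
  have hunion : MeasureTheory.volume (⋃ i ∈ good, I i)
      = (good.card : ℕ) * ENNReal.ofReal M := by
    rw [MeasureTheory.measure_biUnion_finset hdisj hmeas]
    rw [Finset.sum_congr rfl hvolI, Finset.sum_const, nsmul_eq_mul]
  have hUT : (⋃ i ∈ good, I i) ⊆ T := by
    intro u hu
    simp only [Set.mem_iUnion] at hu
    obtain ⟨i, hi, hui⟩ := hu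
    exact hIT i hi hui
  have hlb : (good.card : ℕ) * ENNReal.ofReal M ≤ MeasureTheory.volume T := by
    rw [← hunion]; exact MeasureTheory.measure_mono hUT
  have hTIcc : T ⊆ Set.Icc 0 l := fun u hu => hu.1.1
  have hfin : MeasureTheory.volume T ≠ ⊤ := by
    have h1 : MeasureTheory.volume T ≤ MeasureTheory.volume (Set.Icc 0 l) :=
      MeasureTheory.measure_mono hTIcc
    rw [Real.volume_Icc] at h1
    exact (h1.trans_lt ENNReal.ofReal_lt_top).ne
  have hlbr : (good.card : ℝ) * M ≤ (MeasureTheory.volume T).toReal := by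
    have := ENNReal.toReal_mono hfin hlb
    simpa [ENNReal.toReal_ofReal hM.le] using this
  refine ⟨?_, hsecond⟩
  have hfinal : M * (k : ℝ) / 2 ≤ (good.card : ℝ) * M := by nlinarith
  exact hfinal.trans hlbr
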